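/- The Beam-Warming scheme is Cauchy-stable, i.e. |γ(ξ)| ≤ 1 for all real ξ, if and only if 0 < λ ≤ 2. -/

import Mathlib

open Complex

lemma bw_abs_sq (lam ξ : ℝ) :
    (‖(lam * (lam - 1) / 2 : ℂ) * Complex.exp (-(2 : ℂ) * Complex.I * ξ)
      + (lam * (2 - lam) : ℂ) * Complex.exp (-Complex.I * ξ)
      + ((lam - 1) * (lam - 2) / 2 : ℂ)‖)^2
    = 1 - lam * (2 - lam) * (lam - 1)^2 * (1 - Real.cos ξ)^2 := by
  rw [show (-(2:ℂ)*Complex.I*(ξ:ℂ)) = ((-(2*ξ):ℝ):ℂ)*Complex.I by push_cast; ring,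
      show (-Complex.I*(ξ:ℂ)) = ((-ξ:ℝ):ℂ)*Complex.I by push_cast; ring,
      show ((lam:ℂ) * ((lam:ℂ) - 1) / 2) = ((lam*(lam-1)/2 : ℝ):ℂ) by push_cast; ring,
      show ((lam:ℂ) * (2 - (lam:ℂ))) = ((lam*(2-lam) : ℝ):ℂ) by push_cast; ring,
      show (((lam:ℂ) - 1) * ((lam:ℂ) - 2) / 2) = (((lam-1)*(lam-2)/2 : ℝ):ℂ) by push_cast; ring,
      Complex.sq_norm, Complex.normSq_apply]
  simp only [Complex.add_re, Complex.add_im, Complex.mul_re, Complex.mul_im,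
    Complex.exp_ofReal_mul_I_re, Complex.exp_ofReal_mul_I_im,
    Complex.ofReal_re, Complex.ofReal_im, mul_zero, zero_mul, sub_zero, add_zero, zero_add]
  rw [Real.cos_neg, Real.sin_neg, Real.cos_neg, Real.sin_neg,
    Real.cos_two_mul, Real.sin_two_mul]
  have h := Real.sin_sq_add_cos_sq ξ
  linear_combination ((lam * (lam - 1)) * Real.cos ξ + lam * (2 - lam))^2 * h

theorem beamWarming_cauchyStable_iff (lam : ℝ) (hlam : 0 < lam) :
    (∀ ξ : ℝ, ‖(lam * (lam - 1) / 2 : ℂ) * Complex.exp (-(2 : ℂ) * Complex.I * ξ)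
      + (lam * (2 - lam) : ℂ) * Complex.exp (-Complex.I * ξ)
      + ((lam - 1) * (lam - 2) / 2 : ℂ)‖ ≤ 1)
    ↔ (0 < lam ∧ lam ≤ 2) := by
  constructor
  · intro h
    refine ⟨hlam, ?_⟩
    by_contra hle
    push_neg at hle
    have h1 := h Real.pi
    have h2 := bw_abs_sq lam Real.pi
    rw [Real.cos_pi] at h2
    have habs := norm_nonneg ((lam * (lam - 1) / 2 : ℂ) * Complex.exp (-(2 : ℂ) * Complex.I * (Real.pi:ℝ))
      + (lam * (2 - lam) : ℂ) * Complex.exp (-Complex.I * (Real.pi:ℝ))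
      + ((lam - 1) * (lam - 2) / 2 : ℂ))
    nlinarith [h1, h2, habs, sq_nonneg (lam - 1), mul_pos hlam (by linarith : (0:ℝ) < lam - 2),
      mul_pos (mul_pos hlam (by linarith : (0:ℝ) < lam - 2)) (by nlinarith : (0:ℝ) < (lam-1)^2)]
  · rintro ⟨-, hle⟩ ξ
    have h2 := bw_abs_sq lam ξ
    have habs := norm_nonneg ((lam * (lam - 1) / 2 : ℂ) * Complex.exp (-(2 : ℂ) * Complex.I * (ξ:ℝ))
      + (lam * (2 - lam) : ℂ) * Complex.exp (-Complex.I * (ξ:ℝ))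
      + ((lam - 1) * (lam - 2) / 2 : ℂ))
    nlinarith [sq_nonneg (lam - 1), sq_nonneg (1 - Real.cos ξ),
      mul_nonneg hlam.le (by linarith : (0:ℝ) ≤ 2 - lam),
      mul_nonneg (mul_nonneg (mul_nonneg hlam.le (by linarith : (0:ℝ) ≤ 2 - lam)) (sq_nonneg (lam-1))) (sq_nonneg (1 - Real.cos ξ))]
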